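/- Define f(v₁, v₂) = 64 v₁² v₂² (2 − v₁² − v₂²) / ( π² sqrt( (1 − v₁²)(1 − v₂²) ) ) for 0 < v₁ < v₂ < 1, and for v₂ ∈ (0,1) define the conditional expectation g(v₂) = ( ∫_0^{v₂} v₁ · f(v₁, v₂) dv₁ ) / ( ∫_0^{v₂} f(v₁, v₂) dv₁ ). Then g(v₂) = (3/4) v₂ + O(v₂⁵) as v₂ → 0⁺; that is, there exist constants C > 0 and δ > 0 such that |g(v₂) − (3/4) v₂| ≤ C v₂⁵ for all 0 < v₂ < δ. -/

import Mathlib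

open Real

/-- The joint probability density of the time-of-flight speeds `(V₁, V₂)` of the two
excitations of the XY chain started in the state `|{1,2}⟩` of the `N₃ = 2` subspace. -/
noncomputable def jointSpeedDensity (v₁ v₂ : ℝ) : ℝ :=
  64 * v₁ ^ 2 * v₂ ^ 2 * (2 - v₁ ^ 2 - v₂ ^ 2) /
    (π ^ 2 * Real.sqrt ((1 - v₁ ^ 2) * (1 - v₂ ^ 2)))

/-- The conditional expectation `E(V₁ | V₂ = v₂)` of the speed of the leftmost particle
given that of the rightmost one. -/
noncomputable def condExpSpeed (v₂ : ℝ) : ℝ :=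
  (∫ v₁ in (0:ℝ)..v₂, v₁ * jointSpeedDensity v₁ v₂) /
    (∫ v₁ in (0:ℝ)..v₂, jointSpeedDensity v₁ v₂)

set_option maxHeartbeats 1000000

/-- reduced density -/
noncomputable def hfun (v₂ v₁ : ℝ) : ℝ :=
  v₁ ^ 2 * (2 - v₁ ^ 2 - v₂ ^ 2) / Real.sqrt (1 - v₁ ^ 2)

lemma sqrt_bounds {x : ℝ} (h0 : 0 ≤ x) (h1 : x ≤ 1) :
    1 - x ≤ Real.sqrt (1 - x) ∧ Real.sqrt (1 - x) ≤ 1 ∧ (Real.sqrt (1-x))^2 = 1 - x := by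
  have hx : (0:ℝ) ≤ 1 - x := by linarith
  have hsq := Real.sq_sqrt hx
  have hnn := Real.sqrt_nonneg (1 - x)
  have hle1 : Real.sqrt (1 - x) ≤ 1 := Real.sqrt_le_one.mpr (by linarith)
  refine ⟨?_, hle1, hsq⟩
  nlinarith [hsq, hnn, hle1]

lemma hfun_cont (v₂ : ℝ) (h1 : v₂ < 1) (h0 : 0 < v₂) :
    ContinuousOn (hfun v₂) (Set.uIcc 0 v₂) := by
  have huIcc : Set.uIcc (0:ℝ) v₂ = Set.Icc 0 v₂ := Set.uIcc_of_le h0.le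
  apply ContinuousOn.div
  · fun_prop
  · fun_prop
  · intro x hx
    rw [huIcc] at hx
    have hx0 := hx.1; have hx2 := hx.2
    have : 0 < 1 - x^2 := by nlinarith
    positivity

theorem key_est (v₂ : ℝ) (h0 : 0 < v₂) (h1 : v₂ < 1/2) :
    |condExpSpeed v₂ - (3 / 4) * v₂| ≤ 9 * v₂ ^ 5 := by
  have hv1 : v₂ < 1 := by linarith
  have hc0 : (0:ℝ) < Real.sqrt (1 - v₂^2) := by
    apply Real.sqrt_pos.mpr; nlinarith
  set c : ℝ := 64 * v₂^2 / (π^2 * Real.sqrt (1 - v₂^2)) with hc_def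
  have hπ : (0:ℝ) < π := Real.pi_pos
  have hc : 0 < c := by positivity
  -- split of density on the interval
  have hsplit : ∀ v₁ ∈ Set.uIcc (0:ℝ) v₂, jointSpeedDensity v₁ v₂ = c * hfun v₂ v₁ := by
    intro x hx
    rw [Set.uIcc_of_le h0.le] at hx
    have hx0 := hx.1; have hx2 := hx.2
    have h1x : (0:ℝ) ≤ 1 - x^2 := by nlinarith
    have hsx : (0:ℝ) < Real.sqrt (1 - x^2) := Real.sqrt_pos.mpr (by nlinarith)
    rw [jointSpeedDensity, hfun, hc_def, Real.sqrt_mul h1x]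
    rw [div_mul_div_comm]
    rw [div_eq_div_iff (by positivity) (by positivity)]
    ring
  -- abbreviations
  set N := ∫ v₁ in (0:ℝ)..v₂, v₁ * hfun v₂ v₁ with hN_def
  set D := ∫ v₁ in (0:ℝ)..v₂, hfun v₂ v₁ with hD_def
  have hcont := hfun_cont v₂ hv1 h0
  have hInt : IntervalIntegrable (hfun v₂) MeasureTheory.volume 0 v₂ :=
    hcont.intervalIntegrable
  have hIntN : IntervalIntegrable (fun v₁ => v₁ * hfun v₂ v₁) MeasureTheory.volume 0 v₂ :=
    (continuousOn_id.mul hcont).intervalIntegrable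
  -- condExpSpeed = N / D
  have hupper : (∫ v₁ in (0:ℝ)..v₂, v₁ * jointSpeedDensity v₁ v₂) = c * N := by
    rw [hN_def, ← intervalIntegral.integral_const_mul]
    apply intervalIntegral.integral_congr
    intro x hx
    simp only
    rw [hsplit x hx]; ring
  have hlower : (∫ v₁ in (0:ℝ)..v₂, jointSpeedDensity v₁ v₂) = c * D := by
    rw [hD_def, ← intervalIntegral.integral_const_mul]
    exact intervalIntegral.integral_congr hsplit
  have hce : condExpSpeed v₂ = N / D := by
    rw [condExpSpeed, hupper, hlower, mul_div_mul_left _ _ (ne_of_gt hc)]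
  -- lower bound for D
  have hsq_int : IntervalIntegrable (fun x : ℝ => x^2) MeasureTheory.volume 0 v₂ :=
    ((continuous_pow 2).intervalIntegrable _ _)
  have hDlb : v₂^3 / 3 ≤ D := by
    have hmono : (∫ v₁ in (0:ℝ)..v₂, v₁^2) ≤ D := by
      apply intervalIntegral.integral_mono_on h0.le hsq_int hInt
      intro x hx
      have hx0 := hx.1; have hx2 := hx.2
      obtain ⟨hs1, hs2, hs3⟩ := sqrt_bounds (x := x^2) (by positivity) (by nlinarith)
      have hspos : (0:ℝ) < Real.sqrt (1 - x^2) := by nlinarith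
      rw [hfun, le_div_iff₀ hspos]
      have h32 : (1:ℝ) ≤ 2 - x^2 - v₂^2 := by nlinarith
      nlinarith [mul_le_mul_of_nonneg_left hs2 (sq_nonneg x),
        mul_le_mul_of_nonneg_left h32 (sq_nonneg x)]
    have h2 : (∫ v₁ in (0:ℝ)..v₂, v₁^2) = v₂^3/3 := by
      simp [integral_pow]; ring
    calc v₂^3/3 = ∫ v₁ in (0:ℝ)..v₂, v₁^2 := h2.symm
      _ ≤ D := hmono
  have hD0 : 0 < D := lt_of_lt_of_le (by positivity) hDlb
  -- the centered polynomial integral vanishes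
  have hcube_int : IntervalIntegrable (fun x : ℝ => x^3) MeasureTheory.volume 0 v₂ :=
    ((continuous_pow 3).intervalIntegrable _ _)
  have hpoly : (∫ v₁ in (0:ℝ)..v₂, (v₁ - 3/4*v₂) * ((2 - v₂^2) * v₁^2)) = 0 := by
    have e : (∫ v₁ in (0:ℝ)..v₂, (v₁ - 3/4*v₂) * ((2 - v₂^2) * v₁^2))
        = (2 - v₂^2) * (∫ v₁ in (0:ℝ)..v₂, v₁^3)
          - (3/4*v₂*(2 - v₂^2)) * (∫ v₁ in (0:ℝ)..v₂, v₁^2) := by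
      rw [← intervalIntegral.integral_const_mul, ← intervalIntegral.integral_const_mul,
        ← intervalIntegral.integral_sub (hcube_int.const_mul _) (hsq_int.const_mul _)]
      apply intervalIntegral.integral_congr
      intro x hx; simp only; ring
    rw [e, integral_pow, integral_pow]
    push_cast
    ring
  -- error integral bound
  have herr : |∫ v₁ in (0:ℝ)..v₂,
      (v₁ - 3/4*v₂) * (hfun v₂ v₁ - (2 - v₂^2) * v₁^2)| ≤ 3 * v₂^8 := by
    have hb : ∀ x ∈ Set.uIoc (0:ℝ) v₂,
        ‖(x - 3/4*v₂) * (hfun v₂ x - (2 - v₂^2) * x^2)‖ ≤ 3 * v₂^7 := by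
      intro x hx
      rw [Set.uIoc_of_le h0.le] at hx
      have hx0 : 0 < x := hx.1
      have hx2 : x ≤ v₂ := hx.2
      obtain ⟨hs1, hs2, hs3⟩ := sqrt_bounds (x := x^2) (by positivity) (by nlinarith)
      set t := Real.sqrt (1 - x^2) with ht
      have ht0 : (0:ℝ) < t := by nlinarith
      have hnum : hfun v₂ x - (2 - v₂^2) * x^2
          = x^2 * ((1 - t) * (1 - t - v₂^2)) / t := by
        have htne : t ≠ 0 := ht0.ne'
        rw [hfun, ← ht]
        field_simp
        linear_combination (-1) * hs3
      rw [norm_mul, Real.norm_eq_abs, Real.norm_eq_abs, hnum]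
      have h1t : 0 ≤ 1 - t := by linarith
      have h1t' : 1 - t ≤ x^2 := by nlinarith
      have habs1 : |x - 3/4*v₂| ≤ v₂ := by
        rw [abs_le]; constructor <;> nlinarith
      have habs2 : |x^2 * ((1 - t) * (1 - t - v₂^2)) / t| ≤ 3 * v₂^6 := by
        rw [abs_div, abs_of_pos ht0, div_le_iff₀ ht0]
        have e1 : |1 - t - v₂^2| ≤ x^2 + v₂^2 := by
          rw [abs_le]; constructor <;> nlinarith
        have e2 : |x^2 * ((1 - t) * (1 - t - v₂^2))|
            = x^2 * (1-t) * |1 - t - v₂^2| := by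
          rw [abs_mul, abs_mul, abs_of_nonneg (by positivity : (0:ℝ) ≤ x^2),
            abs_of_nonneg h1t, mul_assoc]
        rw [e2]
        have hb1 : x^2 * (1-t) * |1 - t - v₂^2| ≤ v₂^2 * v₂^2 * (2*v₂^2) := by
          apply mul_le_mul
          · apply mul_le_mul <;> nlinarith
          · nlinarith
          · positivity
          · positivity
        have h34 : (3:ℝ)/4 ≤ t := by nlinarith
        nlinarith [mul_nonneg (pow_nonneg h0.le 6) (by linarith : (0:ℝ) ≤ 3*t - 2)]
      calc |x - 3/4*v₂| * |x^2 * ((1 - t) * (1 - t - v₂^2)) / t|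
          ≤ v₂ * (3 * v₂^6) :=
            mul_le_mul habs1 habs2 (abs_nonneg _) (by positivity)
        _ = 3 * v₂^7 := by ring
    have hni := intervalIntegral.norm_integral_le_of_norm_le_const hb
    rw [Real.norm_eq_abs] at hni
    calc |∫ v₁ in (0:ℝ)..v₂, (v₁ - 3/4*v₂) * (hfun v₂ v₁ - (2 - v₂^2) * v₁^2)|
        ≤ 3 * v₂^7 * |v₂ - 0| := hni
      _ = 3 * v₂^8 := by rw [abs_of_pos (by linarith : (0:ℝ) < v₂ - 0)]; ring
  -- N - (3/4 v₂) D = error integral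
  have hNsub : N - 3/4*v₂ * D = ∫ v₁ in (0:ℝ)..v₂,
      (v₁ - 3/4*v₂) * (hfun v₂ v₁ - (2 - v₂^2) * v₁^2) := by
    have expand : (∫ v₁ in (0:ℝ)..v₂, (v₁ - 3/4*v₂) * (hfun v₂ v₁ - (2 - v₂^2) * v₁^2))
        = (∫ v₁ in (0:ℝ)..v₂, (v₁ * hfun v₂ v₁ - 3/4*v₂ * hfun v₂ v₁))
          - (∫ v₁ in (0:ℝ)..v₂, (v₁ - 3/4*v₂) * ((2 - v₂^2) * v₁^2)) := by
      rw [← intervalIntegral.integral_sub]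
      · apply intervalIntegral.integral_congr
        intro x hx; simp only; ring
      · exact hIntN.sub (hInt.const_mul _)
      · apply Continuous.intervalIntegrable; fun_prop
    rw [expand, hpoly, sub_zero,
      intervalIntegral.integral_sub hIntN (hInt.const_mul _),
      intervalIntegral.integral_const_mul]
  -- conclude
  have hdiff : N / D - 3/4*v₂ = (N - 3/4*v₂*D)/D := by field_simp
  rw [hce, show (3:ℝ)/4 * v₂ = 3/4*v₂ by ring, hdiff, hNsub, abs_div, abs_of_pos hD0]
  calc _ ≤ 3 * v₂^8 / (v₂^3/3) :=
      div_le_div₀ (by positivity) herr (by linarith [pow_pos h0 3]) hDlb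
    _ = 9 * v₂^5 := by
      rw [div_div_eq_mul_div, div_eq_iff (by positivity : (v₂^3 : ℝ) ≠ 0)]
      ring

/-- `E(V₁ | V₂) = (3/4) V₂ + O(V₂⁵)` as `V₂ → 0⁺`: there are constants `C > 0` and `δ > 0`
such that `|E(V₁ | V₂ = v₂) − (3/4) v₂| ≤ C v₂⁵` for all `0 < v₂ < δ`. -/
theorem condExpSpeed_asymptotics :
    ∃ C > (0 : ℝ), ∃ δ > (0 : ℝ), ∀ v₂ : ℝ, 0 < v₂ → v₂ < δ →
      |condExpSpeed v₂ - (3 / 4) * v₂| ≤ C * v₂ ^ 5 := by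

  refine ⟨9, by norm_num, 1/2, by norm_num, fun v₂ h0 h1 => ?_⟩
  calc |condExpSpeed v₂ - (3 / 4) * v₂| ≤ 9 * v₂ ^ 5 := key_est v₂ h0 h1
    _ = 9 * v₂ ^ 5 := rfl
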